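/- Let X, Y be real Hilbert spaces, A : X → Y a surjective bounded linear operator, and ℓ ∈ X* a continuous linear functional. Define p ∈ Y* by p := −ℓ ∘ A⁻, where A⁻ is the minimum-norm right inverse of A (with range (ker A)^⊥). Then the functional ℓ + p ∘ A vanishes on (ker A)^⊥, and consequently ‖ℓ + p∘A‖_{X*} ≤ ‖ℓ + q∘A‖_{X*} for every q ∈ Y*; that is, p minimizes the dual norm of the Lagrangian gradient among all multipliers. -/

import Mathlib

/-- The Lagrange multiplier p = -ℓ ∘ A⁻ makes ℓ + p∘A vanish on (ker A)^⊥ and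
minimizes the dual norm of the Lagrangian gradient among all multipliers. -/
theorem stmt6
    {X : Type*} [NormedAddCommGroup X] [InnerProductSpace ℝ X] [CompleteSpace X]
    {Y : Type*} [NormedAddCommGroup Y] [InnerProductSpace ℝ Y] [CompleteSpace Y]
    (A : X →L[ℝ] Y) (hA : Function.Surjective A)
    (B : Y →L[ℝ] X) (hB1 : ∀ y : Y, A (B y) = y)
    (hB2 : ∀ y : Y, B y ∈ (LinearMap.ker (A : X →ₗ[ℝ] Y))ᗮ)
    (ℓ : X →L[ℝ] ℝ) (p : Y →L[ℝ] ℝ) (hp : p = -(ℓ.comp B)) :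
    (∀ w ∈ (LinearMap.ker (A : X →ₗ[ℝ] Y))ᗮ, (ℓ + p.comp A) w = 0) ∧
      ∀ q : Y →L[ℝ] ℝ, ‖ℓ + p.comp A‖ ≤ ‖ℓ + q.comp A‖ := by
  set K : Submodule ℝ X := LinearMap.ker (A : X →ₗ[ℝ] Y) with hK
  -- On (ker A)ᗮ, B (A w) = w
  have hBA : ∀ w ∈ Kᗮ, B (A w) = w := by
    intro w hw
    have hker : B (A w) - w ∈ K := by
      simp [hK, LinearMap.mem_ker, map_sub, hB1]
    have horth : B (A w) - w ∈ Kᗮ := Kᗮ.sub_mem (hB2 (A w)) hw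
    have : B (A w) - w = 0 := by
      have := (Submodule.mem_orthogonal K (B (A w) - w)).mp horth _ hker
      simpa [real_inner_self_eq_norm_sq] using
        (inner_self_eq_zero (𝕜 := ℝ)).mp this
    exact sub_eq_zero.mp this
  have hvanish : ∀ w ∈ Kᗮ, (ℓ + p.comp A) w = 0 := by
    intro w hw
    simp [hp, hBA w hw]
  refine ⟨hvanish, fun q => ?_⟩
  -- ker A is closed, so orthogonal decomposition holds
  have hclosed : IsClosed (K : Set X) := ContinuousLinearMap.isClosed_ker A
  haveI : CompleteSpace K := hclosed.completeSpace_coe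
  refine ContinuousLinearMap.opNorm_le_bound _ (norm_nonneg _) fun x => ?_
  obtain ⟨u, hu, w, hw, rfl⟩ := K.exists_add_mem_mem_orthogonal x
  have hAu : A u = 0 := hu
  have h1 : (ℓ + p.comp A) (u + w) = (ℓ + q.comp A) u := by
    have h2 : (ℓ + p.comp A) w = 0 := hvanish w hw
    simp only [ContinuousLinearMap.add_apply, ContinuousLinearMap.comp_apply, map_add] at h2 ⊢
    simp [hAu] at h2 ⊢
    linarith
  have hnorm : ‖u‖ ≤ ‖u + w‖ := by
    have hiuw : (inner ℝ u w : ℝ) = 0 := (Submodule.mem_orthogonal K w).mp hw u hu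
    have hsq : ‖u + w‖ ^ 2 = ‖u‖ ^ 2 + ‖w‖ ^ 2 := by
      rw [norm_add_sq_real, hiuw]; ring
    nlinarith [norm_nonneg u, norm_nonneg w, norm_nonneg (u + w), sq_nonneg ‖w‖]
  calc ‖(ℓ + p.comp A) (u + w)‖ = ‖(ℓ + q.comp A) u‖ := by rw [h1]
    _ ≤ ‖ℓ + q.comp A‖ * ‖u‖ := (ℓ + q.comp A).le_opNorm u
    _ ≤ ‖ℓ + q.comp A‖ * ‖u + w‖ := by
        exact mul_le_mul_of_nonneg_left hnorm (norm_nonneg _)
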